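/- Let A be a bounded operator on a complex Hilbert space H that is *-paranormal, i.e., ‖A*x‖² ≤ ‖A²x‖·‖x‖ for all x. If A is quasinilpotent, then A = 0. -/

import Mathlib

open scoped InnerProductSpace
open ContinuousLinearMap Filter

/-- Pointwise key inequality for *-paranormal operators:
`‖A^(n+1) x‖^4 ≤ ‖A^(n+3) x‖ * ‖A^(n+1) x‖ * ‖A^n x‖^2`. -/
lemma star_paranormal_pointwise
    {H : Type*} [NormedAddCommGroup H] [InnerProductSpace ℂ H] [CompleteSpace H]
    (A : H →L[ℂ] H)
    (hsp : ∀ x : H, ‖(ContinuousLinearMap.adjoint A) x‖ ^ 2 ≤ ‖(A ^ 2) x‖ * ‖x‖)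
    (n : ℕ) (x : H) :
    ‖(A ^ (n + 1)) x‖ ^ 4 ≤ ‖(A ^ (n + 3)) x‖ * ‖(A ^ (n + 1)) x‖ * ‖(A ^ n) x‖ ^ 2 := by
  set u := (A ^ (n + 1)) x with hu
  have hu' : u = A ((A ^ n) x) := by
    rw [hu, pow_succ']; rfl
  -- Cauchy-Schwarz step
  have h1 : ‖u‖ ^ 2 ≤ ‖(ContinuousLinearMap.adjoint A) u‖ * ‖(A ^ n) x‖ := by
    have : (‖u‖ : ℝ) ^ 2 = ‖⟪(ContinuousLinearMap.adjoint A) u, (A ^ n) x⟫_ℂ‖ := by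
      rw [ContinuousLinearMap.adjoint_inner_left, ← hu', inner_self_eq_norm_sq_to_K]
      simp [norm_pow]
    rw [this]
    exact norm_inner_le_norm _ _
  -- *-paranormal step
  have h2 : ‖(ContinuousLinearMap.adjoint A) u‖ ^ 2 ≤ ‖(A ^ (n + 3)) x‖ * ‖u‖ := by
    have := hsp u
    have hA2 : (A ^ 2) u = (A ^ (n + 3)) x := by
      rw [hu]
      have : A ^ (n + 3) = A ^ 2 * A ^ (n + 1) := by
        rw [← pow_add]; congr 1; omega
      rw [this]; rfl
    rwa [hA2] at this
  calc ‖u‖ ^ 4 = (‖u‖ ^ 2) ^ 2 := by ring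
    _ ≤ (‖(ContinuousLinearMap.adjoint A) u‖ * ‖(A ^ n) x‖) ^ 2 := by
        apply pow_le_pow_left₀ (by positivity) h1
    _ = ‖(ContinuousLinearMap.adjoint A) u‖ ^ 2 * ‖(A ^ n) x‖ ^ 2 := by ring
    _ ≤ (‖(A ^ (n + 3)) x‖ * ‖u‖) * ‖(A ^ n) x‖ ^ 2 := by
        apply mul_le_mul_of_nonneg_right h2 (by positivity)
    _ = ‖(A ^ (n + 3)) x‖ * ‖u‖ * ‖(A ^ n) x‖ ^ 2 := by ring

/-- Operator-norm cube inequality. -/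
lemma star_paranormal_norm_cube
    {H : Type*} [NormedAddCommGroup H] [InnerProductSpace ℂ H] [CompleteSpace H]
    (A : H →L[ℂ] H)
    (hsp : ∀ x : H, ‖(ContinuousLinearMap.adjoint A) x‖ ^ 2 ≤ ‖(A ^ 2) x‖ * ‖x‖)
    (n : ℕ) :
    ‖A ^ (n + 1)‖ ^ 3 ≤ ‖A ^ (n + 3)‖ * ‖A ^ n‖ ^ 2 := by
  set M : ℝ := ‖A ^ (n + 3)‖ * ‖A ^ n‖ ^ 2 with hM
  have hM0 : 0 ≤ M := by positivity
  set C : ℝ := M ^ ((1 : ℝ) / 3) with hC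
  have hC0 : 0 ≤ C := Real.rpow_nonneg hM0 _
  have hC3 : C ^ 3 = M := by
    rw [hC, ← Real.rpow_natCast (M ^ ((1:ℝ)/3)) 3, ← Real.rpow_mul hM0]
    norm_num
  have hb : ‖A ^ (n + 1)‖ ≤ C := by
    apply ContinuousLinearMap.opNorm_le_bound _ hC0
    intro x
    rcases eq_or_lt_of_le (norm_nonneg ((A ^ (n + 1)) x)) with h0 | h0
    · rw [← h0]; positivity
    have key := star_paranormal_pointwise A hsp n x
    have hb1 : ‖(A ^ (n + 3)) x‖ ≤ ‖A ^ (n + 3)‖ * ‖x‖ := le_opNorm _ _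
    have hb2 : ‖(A ^ n) x‖ ≤ ‖A ^ n‖ * ‖x‖ := le_opNorm _ _
    have h4 : ‖(A ^ (n + 1)) x‖ ^ 4 ≤ (M * ‖x‖ ^ 3) * ‖(A ^ (n + 1)) x‖ := by
      calc ‖(A ^ (n + 1)) x‖ ^ 4
          ≤ ‖(A ^ (n + 3)) x‖ * ‖(A ^ (n + 1)) x‖ * ‖(A ^ n) x‖ ^ 2 := key
        _ ≤ (‖A ^ (n + 3)‖ * ‖x‖) * ‖(A ^ (n + 1)) x‖ * (‖A ^ n‖ * ‖x‖) ^ 2 := by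
            gcongr
        _ = (M * ‖x‖ ^ 3) * ‖(A ^ (n + 1)) x‖ := by rw [hM]; ring
    have h3 : ‖(A ^ (n + 1)) x‖ ^ 3 ≤ M * ‖x‖ ^ 3 := by
      have := (mul_le_mul_iff_of_pos_right h0).mpr (le_refl (1:ℝ))
      nlinarith [h0]
    have : ‖(A ^ (n + 1)) x‖ ^ 3 ≤ (C * ‖x‖) ^ 3 := by
      rw [mul_pow, hC3]; exact h3
    exact (pow_le_pow_iff_left₀ (norm_nonneg _) (by positivity) (by norm_num)).mp this
  calc ‖A ^ (n + 1)‖ ^ 3 ≤ C ^ 3 := pow_le_pow_left₀ (norm_nonneg _) hb 3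
    _ = M := hC3

/-- *-paranormal operators are normaloid: `‖A‖ ^ n ≤ ‖A ^ n‖`. -/
lemma star_paranormal_normaloid
    {H : Type*} [NormedAddCommGroup H] [InnerProductSpace ℂ H] [CompleteSpace H]
    (A : H →L[ℂ] H)
    (hsp : ∀ x : H, ‖(ContinuousLinearMap.adjoint A) x‖ ^ 2 ≤ ‖(A ^ 2) x‖ * ‖x‖)
    (n : ℕ) : ‖A‖ ^ (n + 1) ≤ ‖A ^ (n + 1)‖ := by
  -- submultiplicativity
  have sub : ∀ m : ℕ, ‖A ^ m‖ ≤ ‖A‖ ^ m := by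
    intro m
    induction m with
    | zero => rw [pow_zero, pow_zero]; exact ContinuousLinearMap.norm_id_le
    | succ k ih =>
        calc ‖A ^ (k + 1)‖ = ‖A ^ k * A‖ := by rw [pow_succ]
          _ ≤ ‖A ^ k‖ * ‖A‖ := norm_mul_le _ _
          _ ≤ ‖A‖ ^ k * ‖A‖ := by gcongr
          _ = ‖A‖ ^ (k + 1) := by rw [pow_succ]
  -- base case n = 1 : ‖A‖^2 ≤ ‖A^2‖
  have base2 : ‖A‖ ^ 2 ≤ ‖A ^ 2‖ := by
    have hadj : ‖ContinuousLinearMap.adjoint A‖ ≤ Real.sqrt ‖A ^ 2‖ := by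
      apply ContinuousLinearMap.opNorm_le_bound _ (Real.sqrt_nonneg _)
      intro x
      have h := hsp x
      have h' : ‖(ContinuousLinearMap.adjoint A) x‖ ^ 2 ≤ (Real.sqrt ‖A ^ 2‖ * ‖x‖) ^ 2 := by
        calc ‖(ContinuousLinearMap.adjoint A) x‖ ^ 2 ≤ ‖(A ^ 2) x‖ * ‖x‖ := h
          _ ≤ (‖A ^ 2‖ * ‖x‖) * ‖x‖ := by gcongr; exact le_opNorm _ _
          _ = ‖A ^ 2‖ * ‖x‖ ^ 2 := by ring
          _ = (Real.sqrt ‖A ^ 2‖ * ‖x‖) ^ 2 := by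
              rw [mul_pow, Real.sq_sqrt (norm_nonneg _)]
      exact (pow_le_pow_iff_left₀ (norm_nonneg _) (by positivity) (by norm_num)).mp h'
    have hnorm : ‖A‖ = ‖ContinuousLinearMap.adjoint A‖ :=
      (ContinuousLinearMap.adjoint.norm_map A).symm
    have : ‖A‖ ≤ Real.sqrt ‖A ^ 2‖ := hnorm ▸ hadj
    calc ‖A‖ ^ 2 ≤ Real.sqrt ‖A ^ 2‖ ^ 2 := pow_le_pow_left₀ (norm_nonneg _) this 2
      _ = ‖A ^ 2‖ := Real.sq_sqrt (norm_nonneg _)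
  -- two-step induction
  induction n using Nat.twoStepInduction with
  | zero => simpa using le_refl ‖A‖
  | one => exact base2
  | more k ih _ =>
      by_cases hA0 : ‖A‖ = 0
      · rw [hA0, zero_pow (by omega)]; exact norm_nonneg _
      have hApos : 0 < ‖A‖ := lt_of_le_of_ne (norm_nonneg _) (Ne.symm hA0)
      have cube := star_paranormal_norm_cube A hsp k
      have chain : ‖A‖ ^ (k + 3) * ‖A‖ ^ (2 * k) ≤ ‖A ^ (k + 3)‖ * ‖A‖ ^ (2 * k) := by
        calc ‖A‖ ^ (k + 3) * ‖A‖ ^ (2 * k) = (‖A‖ ^ (k + 1)) ^ 3 := by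
              rw [← pow_add, ← pow_mul]; congr 1; ring
          _ ≤ ‖A ^ (k + 1)‖ ^ 3 := pow_le_pow_left₀ (by positivity) ih 3
          _ ≤ ‖A ^ (k + 3)‖ * ‖A ^ k‖ ^ 2 := cube
          _ ≤ ‖A ^ (k + 3)‖ * (‖A‖ ^ k) ^ 2 := by
              have h2 := pow_le_pow_left₀ (norm_nonneg _) (sub k) 2
              exact mul_le_mul_of_nonneg_left h2 (norm_nonneg _)
          _ = ‖A ^ (k + 3)‖ * ‖A‖ ^ (2 * k) := by rw [← pow_mul]; ring_nf
      exact le_of_mul_le_mul_right chain (by positivity)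

theorem star_paranormal_quasinilpotent_eq_zero
    {H : Type*} [NormedAddCommGroup H] [InnerProductSpace ℂ H] [CompleteSpace H]
    (A : H →L[ℂ] H)
    (hsp : ∀ x : H, ‖(ContinuousLinearMap.adjoint A) x‖ ^ 2 ≤ ‖(A ^ 2) x‖ * ‖x‖)
    (hquasi : spectralRadius ℂ A = 0) :
    A = 0 := by
  have gelfand := spectrum.pow_nnnorm_pow_one_div_tendsto_nhds_spectralRadius A
  rw [hquasi] at gelfand
  have hle : (‖A‖₊ : ENNReal) ≤ 0 := by
    apply ge_of_tendsto gelfand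
    filter_upwards [eventually_ge_atTop 1] with n hn
    have hkey : ‖A‖₊ ^ n ≤ ‖A ^ n‖₊ := by
      obtain ⟨m, rfl⟩ := Nat.exists_eq_add_of_le hn
      have := star_paranormal_normaloid A hsp m
      rw [← NNReal.coe_le_coe]
      push_cast
      simpa [add_comm] using this
    have hn0 : (n : ℝ) ≠ 0 := by positivity
    calc (‖A‖₊ : ENNReal) = ((‖A‖₊ : ENNReal) ^ (n : ℝ)) ^ ((1 : ℝ) / n) := by
          rw [← ENNReal.rpow_mul, mul_one_div, div_self hn0, ENNReal.rpow_one]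
      _ ≤ ((‖A ^ n‖₊ : ENNReal)) ^ ((1 : ℝ) / n) := by
          apply ENNReal.rpow_le_rpow _ (by positivity)
          rw [ENNReal.rpow_natCast]
          exact_mod_cast hkey
  have : ‖A‖₊ = 0 := by simpa using hle
  have : ‖A‖ = 0 := by simpa using congrArg NNReal.toReal this
  exact norm_eq_zero.mp this
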